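/- Let G be a finite group whose commutator subgroup G' = [G,G] has order at most 2. Then D(G) <= d(G) + |G'|. -/

import Mathlib

/-- The set of products of a multiset `S` over `G`: all elements obtained by
multiplying the terms of `S` in some order. -/
def prodSet {G : Type*} [Group G] (S : Multiset G) : Set G :=
  {g | ∃ l : List G, (l : Multiset G) = S ∧ l.prod = g}

/-- `S` is a product-one sequence if its terms can be ordered with product `1`. -/
def IsProductOne {G : Type*} [Group G] (S : Multiset G) : Prop :=
  (1 : G) ∈ prodSet S

/-- `S` is product-one free if no nonempty sub-multiset is a product-one sequence. -/
def ProductOneFree {G : Type*} [Group G] (S : Multiset G) : Prop :=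
  ∀ T : Multiset G, T ≤ S → T ≠ 0 → ¬ IsProductOne T

/-- `S` is a minimal product-one sequence (an atom): a nonempty product-one sequence
that cannot be factored into two nonempty product-one sub-multisets. -/
def IsMinimalProductOne {G : Type*} [Group G] (S : Multiset G) : Prop :=
  S ≠ 0 ∧ IsProductOne S ∧
    ¬ ∃ T T' : Multiset G, S = T + T' ∧ T ≠ 0 ∧ T' ≠ 0 ∧ IsProductOne T ∧ IsProductOne T'

/-- The small Davenport constant: the supremum of lengths of product-one free sequences. -/
noncomputable def smallDavenport (G : Type*) [Group G] : ℕ∞ :=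
  sSup {n : ℕ∞ | ∃ S : Multiset G, ProductOneFree S ∧ (S.card : ℕ∞) = n}

/-- The large Davenport constant: the supremum of lengths of minimal product-one sequences. -/
noncomputable def largeDavenport (G : Type*) [Group G] : ℕ∞ :=
  sSup {n : ℕ∞ | ∃ S : Multiset G, IsMinimalProductOne S ∧ (S.card : ℕ∞) = n}

section Aux

variable {G : Type*} [Group G]

lemma prod_mul_inv_mem_commutator {l₁ l₂ : List G} (h : l₁.Perm l₂) :
    l₁.prod * l₂.prod⁻¹ ∈ commutator G := by
  have hφ : Abelianization.of (l₁.prod * l₂.prod⁻¹) = 1 := by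
    rw [map_mul, map_inv, map_list_prod, map_list_prod, (h.map _).prod_eq, mul_inv_cancel]
  exact (QuotientGroup.eq_one_iff _).mp hφ

/-- Sub-lemma A: if `S = T + C` is an atom with `T` nonempty product-one and `C` nonempty,
and `|G'| ≤ 2`, then any two elements of `prodSet C` agree. -/
lemma complement_prod_unique [Finite G] (hcard : Nat.card (commutator G) ≤ 2)
    {S T C : Multiset G} (hS : IsMinimalProductOne S)
    (hsum : S = T + C) (hT0 : T ≠ 0) (hT1 : IsProductOne T) (hC0 : C ≠ 0)
    {c₁ c₂ : G} (h₁ : c₁ ∈ prodSet C) (h₂ : c₂ ∈ prodSet C) : c₁ = c₂ := by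
  obtain ⟨l₀, hl₀, hl₀1⟩ := hS.2.1
  obtain ⟨lt, hlt, hlt1⟩ := hT1
  have key : ∀ c ∈ prodSet C, c ∈ commutator G ∧ c ≠ 1 := by
    rintro c ⟨lc, hlc, rfl⟩
    constructor
    · have hml : ((lt ++ lc : List G) : Multiset G) = (l₀ : Multiset G) := by
        rw [← Multiset.coe_add] at *
        · rw [hlt, hlc, hl₀, hsum]
      have hperm : (lt ++ lc).Perm l₀ := Multiset.coe_eq_coe.mp hml
      have := prod_mul_inv_mem_commutator hperm
      rwa [List.prod_append, hlt1, one_mul, hl₀1, inv_one, mul_one] at this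
    · intro hc1
      exact hS.2.2 ⟨T, C, hsum, hT0, hC0, ⟨lt, hlt, hlt1⟩, ⟨lc, hlc, hc1⟩⟩
  obtain ⟨hm₁, hn₁⟩ := key c₁ h₁
  obtain ⟨hm₂, hn₂⟩ := key c₂ h₂
  by_contra hne
  have hinj : Function.Injective
      (![⟨1, (commutator G).one_mem⟩, ⟨c₁, hm₁⟩, ⟨c₂, hm₂⟩] : Fin 3 → commutator G) := by
    intro i j hij
    fin_cases i <;> fin_cases j <;>
      simp_all [Subtype.ext_iff, hn₁, hn₂, hne, eq_comm]
  have h3 := Nat.card_le_card_of_injective _ hinj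
  simp [Nat.card_eq_fintype_card] at h3
  omega

end Aux

section Core

open scoped commutatorElement

variable {G : Type*} [Group G] [Finite G]

lemma core_card_le (hcard : Nat.card (commutator G) ≤ 2) (m : ℕ)
    (hfree : ∀ U : Multiset G, ProductOneFree U → U.card ≤ m)
    (S : Multiset G) (hS : IsMinimalProductOne S) :
    S.card ≤ m + Nat.card (commutator G) := by
  classical
  by_contra hn
  push_neg at hn
  have hk1 : 1 ≤ Nat.card (commutator G) := Nat.one_le_iff_ne_zero.mpr Nat.card_pos.ne'
  have hnotfree : ∀ U : Multiset G, m < U.card →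
      ∃ T, T ≤ U ∧ T ≠ 0 ∧ IsProductOne T := by
    intro U hU
    by_contra hfr
    push_neg at hfr
    have hPF : ProductOneFree U := fun T hTU hT0 => hfr T hTU hT0
    exact absurd (hfree U hPF) (by omega)
  -- Step 1 : all values of S pairwise commute
  have hcomm : ∀ x ∈ S, ∀ y ∈ S, Commute x y := by
    intro x hx y hy
    rcases eq_or_ne x y with rfl | hxy
    · exact Commute.refl x
    rcases Nat.lt_or_ge (Nat.card (commutator G)) 2 with h1 | h2
    · -- trivial commutator subgroup
      have hbot : commutator G = ⊥ := Subgroup.card_eq_one.mp (by omega)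
      have : ⁅x, y⁆ ∈ commutator G :=
        Subgroup.commutator_mem_commutator (Subgroup.mem_top x) (Subgroup.mem_top y)
      rw [hbot, Subgroup.mem_bot] at this
      exact commutatorElement_eq_one_iff_commute.mp this
    · have hk : Nat.card (commutator G) = 2 := le_antisymm hcard h2
      have hyx : y ∈ S.erase x := (Multiset.mem_erase_of_ne hxy.symm).mpr hy
      have hSrw : S = x ::ₘ y ::ₘ (S.erase x).erase y := by
        rw [Multiset.cons_erase hyx, Multiset.cons_erase hx]
      have hcard2 : m < ((S.erase x).erase y).card := by
        have hc2 : ((S.erase x).erase y).card + 2 = S.card := by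
          have := congrArg Multiset.card hSrw
          simp only [Multiset.card_cons] at this
          omega
        omega
      obtain ⟨T, hTle, hT0, hT1⟩ := hnotfree _ hcard2
      obtain ⟨C₀, hC₀⟩ := Multiset.le_iff_exists_add.mp hTle
      have hsum : S = T + (x ::ₘ y ::ₘ C₀) := by
        rw [hSrw, hC₀]
        simp only [Multiset.add_cons, Multiset.cons_add]
      have hC0' : (x ::ₘ y ::ₘ C₀ : Multiset G) ≠ 0 := by simp
      have h₁ : x * (y * C₀.toList.prod) ∈ prodSet (x ::ₘ y ::ₘ C₀) := by
        refine ⟨x :: y :: C₀.toList, ?_, by simp⟩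
        rw [← Multiset.cons_coe, ← Multiset.cons_coe, Multiset.coe_toList]
      have h₂ : y * (x * C₀.toList.prod) ∈ prodSet (x ::ₘ y ::ₘ C₀) := by
        refine ⟨y :: x :: C₀.toList, ?_, by simp⟩
        rw [← Multiset.cons_coe, ← Multiset.cons_coe, Multiset.coe_toList,
          Multiset.cons_swap]
      have heq := complement_prod_unique hcard hS hsum hT0 hT1 hC0' h₁ h₂
      have : x * y = y * x := by
        have h' : x * y * C₀.toList.prod = y * x * C₀.toList.prod := by
          rw [mul_assoc, mul_assoc]; exact heq
        exact mul_right_cancel h'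
      exact this
  -- Step 2/3
  obtain ⟨hS0, hS1, hSatom⟩ := hS
  obtain ⟨x, hx⟩ := Multiset.exists_mem_of_ne_zero hS0
  have hcard1 : m < (S.erase x).card := by
    have herase : (S.erase x).card = S.card - 1 := by
      rw [Multiset.card_erase_of_mem hx]
      rfl
    omega
  obtain ⟨T, hTle, hT0, hT1⟩ := hnotfree _ hcard1
  obtain ⟨C₀, hC₀⟩ := Multiset.le_iff_exists_add.mp hTle
  have hsum : S = T + (x ::ₘ C₀) := by
    rw [← Multiset.cons_erase hx, hC₀]
    simp only [Multiset.add_cons, Multiset.cons_add]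
  have hCone : IsProductOne (x ::ₘ C₀ : Multiset G) := by
    obtain ⟨lt, hlt, hlt1⟩ := hT1
    obtain ⟨l₀, hl₀, hl₀1⟩ := hS1
    refine ⟨(x ::ₘ C₀).toList, Multiset.coe_toList _, ?_⟩
    have hml : ((lt ++ (x ::ₘ C₀).toList : List G) : Multiset G) = (l₀ : Multiset G) := by
      rw [← Multiset.coe_add, hlt, Multiset.coe_toList, hl₀, ← hsum]
    have hperm : (lt ++ (x ::ₘ C₀).toList).Perm l₀ := Multiset.coe_eq_coe.mp hml
    have hpw : (lt ++ (x ::ₘ C₀).toList).Pairwise Commute := by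
      apply List.pairwise_of_forall_mem_list
      intro a ha b hb
      have ha' : a ∈ S := by
        rw [← hl₀]; exact hperm.subset ha
      have hb' : b ∈ S := by
        rw [← hl₀]; exact hperm.subset hb
      exact hcomm a ha' b hb'
    have hpe := hperm.prod_eq' hpw
    rw [List.prod_append, hlt1, one_mul, hl₀1] at hpe
    exact hpe
  exact hSatom ⟨T, x ::ₘ C₀, hsum, hT0, by simp, hT1, hCone⟩

end Core

/-- If the commutator subgroup of a finite group `G` has order at most `2`, then
`D(G) ≤ d(G) + |G'|`. -/
theorem largeDavenport_le_of_commutator_small (G : Type*) [Group G] [Finite G]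
    (h : Nat.card (commutator G) ≤ 2) :
    largeDavenport G ≤ smallDavenport G + (Nat.card (commutator G) : ℕ∞) := by
  apply sSup_le
  rintro n ⟨S, hS, rfl⟩
  rcases eq_or_ne (smallDavenport G) ⊤ with htop | hne
  · rw [htop, top_add]; exact le_top
  · set m := (smallDavenport G).toNat with hmdef
    have hm : (m : ℕ∞) = smallDavenport G := ENat.coe_toNat hne
    have hfree : ∀ U : Multiset G, ProductOneFree U → U.card ≤ m := by
      intro U hU
      have hle : (U.card : ℕ∞) ≤ smallDavenport G := le_sSup ⟨U, hU, rfl⟩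
      rw [← hm] at hle
      exact_mod_cast hle
    have hcore := core_card_le h m hfree S hS
    rw [← hm]
    exact_mod_cast hcore
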